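/- (Fuchs ordering theorem) A subset S of a group G extends to a total two-sided order of G if and only if for every finite list a₁,…,a_m of non-identity elements of G there exist signs δ₁,…,δ_m ∈ {−1,1} such that e is not in the normal subsemigroup of G generated by S ∪ {a₁^{δ₁},…,a_m^{δ_m}}. -/

import Mathlib

/-- The normal subsemigroup of `G` generated by `T`: the subsemigroup generated
by all conjugates of elements of `T`. -/
def normalSubsemigroupClosure (G : Type*) [Group G] (T : Set G) : Subsemigroup G :=
  Subsemigroup.closure {x : G | ∃ t ∈ T, ∃ g : G, x = g * t * g⁻¹}

namespace FuchsAux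

variable {G : Type*} [Group G]

lemma nsc_mono {U V : Set G} (h : U ⊆ V) :
    (normalSubsemigroupClosure G U : Set G) ⊆ normalSubsemigroupClosure G V :=
  Subsemigroup.closure_mono (fun x hx => by
    obtain ⟨t, ht, g, hg⟩ := hx; exact ⟨t, h ht, g, hg⟩)

lemma subset_nsc {U : Set G} : U ⊆ normalSubsemigroupClosure G U :=
  fun t ht => Subsemigroup.subset_closure ⟨t, ht, 1, by simp⟩

lemma nsc_conj {U : Set G} {x : G} (hx : x ∈ normalSubsemigroupClosure G U) (g : G) :
    g * x * g⁻¹ ∈ normalSubsemigroupClosure G U := by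
  induction hx using Subsemigroup.closure_induction with
  | mem y hy =>
      obtain ⟨t, ht, h, rfl⟩ := hy
      exact Subsemigroup.subset_closure ⟨t, ht, g * h, by group⟩
  | mul x y hx hy ihx ihy =>
      have : g * (x * y) * g⁻¹ = (g * x * g⁻¹) * (g * y * g⁻¹) := by group
      rw [this]; exact mul_mem ihx ihy

lemma mem_nsc_finite {U : Set G} {x : G} (hx : x ∈ normalSubsemigroupClosure G U) :
    ∃ F : Finset G, ↑F ⊆ U ∧ x ∈ normalSubsemigroupClosure G ↑F := by
  classical
  induction hx using Subsemigroup.closure_induction with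
  | mem y hy =>
      obtain ⟨t, ht, g, rfl⟩ := hy
      exact ⟨{t}, by simpa using ht,
        Subsemigroup.subset_closure ⟨t, by simp, g, rfl⟩⟩
  | mul x y hx hy ihx ihy =>
      obtain ⟨F1, h1, m1⟩ := ihx
      obtain ⟨F2, h2, m2⟩ := ihy
      refine ⟨F1 ∪ F2, ?_, mul_mem (nsc_mono ?_ m1) (nsc_mono ?_ m2)⟩
      · rw [Finset.coe_union]; exact Set.union_subset h1 h2
      · rw [Finset.coe_union]; exact Set.subset_union_left
      · rw [Finset.coe_union]; exact Set.subset_union_right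

/-- The signed image of a set. -/
def sgn (ε : G → Bool) (F : Set G) : Set G := (fun x => if ε x then x else x⁻¹) '' F

/-- A set `T` is *good* if for every finite set of elements avoiding `1`, there is a
choice of signs keeping `1` out of the generated normal subsemigroup. -/
def Good (T : Set G) : Prop :=
  ∀ F : Finset G, (1 : G) ∉ F →
    ∃ ε : G → Bool, (1 : G) ∉ normalSubsemigroupClosure G (T ∪ sgn ε ↑F)

lemma sgn_congr {ε ε' : G → Bool} {F : Set G} (h : ∀ x ∈ F, ε x = ε' x) :
    sgn ε F = sgn ε' F :=
  Set.image_congr (fun a ha => by rw [h a ha])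

lemma good_insert {T : Set G} (hT : Good T) {g : G} (hg : g ≠ 1) :
    Good (insert g T) ∨ Good (insert g⁻¹ T) := by
  classical
  by_contra hcon
  push_neg at hcon
  obtain ⟨h1, h2⟩ := hcon
  simp only [Good, not_forall, not_exists, not_not] at h1 h2
  obtain ⟨F1, hF1, hall1⟩ := h1
  obtain ⟨F2, hF2, hall2⟩ := h2
  have hgF : (1 : G) ∉ insert g (F1 ∪ F2) := by
    simp only [Finset.mem_insert, Finset.mem_union]
    rintro (h | h | h)
    · exact hg h.symm
    · exact hF1 h
    · exact hF2 h
  obtain ⟨ε, hε⟩ := hT _ hgF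
  apply hε
  have hsub : ∀ W : Set G, W ⊆ sgn ε ↑(insert g (F1 ∪ F2)) →
      ∀ x ∈ W, x ∈ normalSubsemigroupClosure G (T ∪ sgn ε ↑(insert g (F1 ∪ F2))) := by
    intro W hW x hx
    exact subset_nsc (Set.mem_union_right _ (hW hx))
  rcases hb : ε g with _ | _
  · -- ε g = false : use g⁻¹ and F2
    have h1mem := hall2 ε
    refine nsc_mono ?_ h1mem
    intro x hx
    rcases hx with hx | hx
    · rcases hx with hx | hx
      · -- x = g⁻¹
        refine Set.mem_union_right _ ⟨g, ?_, ?_⟩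
        · simp
        · simp [hb, hx]
      · exact Set.mem_union_left _ hx
    · -- x ∈ sgn ε F2
      obtain ⟨y, hy, rfl⟩ := hx
      exact Set.mem_union_right _ ⟨y, by simp [hy], rfl⟩
  · -- ε g = true : use g and F1
    have h1mem := hall1 ε
    refine nsc_mono ?_ h1mem
    intro x hx
    rcases hx with hx | hx
    · rcases hx with hx | hx
      · refine Set.mem_union_right _ ⟨g, ?_, ?_⟩
        · simp
        · simp [hb, hx]
      · exact Set.mem_union_left _ hx
    · obtain ⟨y, hy, rfl⟩ := hx
      exact Set.mem_union_right _ ⟨y, by simp [hy], rfl⟩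

lemma finite_subset_chain {c : Set (Set G)} (hc : IsChain (· ⊆ ·) c) (hne : c.Nonempty)
    {U : Set G} (hU : U.Finite) (hsub : U ⊆ ⋃₀ c) : ∃ t ∈ c, U ⊆ t := by
  refine Set.Finite.induction_on (motive := fun U _ => U ⊆ ⋃₀ c → ∃ t ∈ c, U ⊆ t) U hU ?_ (fun {a s} => ?_) hsub
  · intro _
    obtain ⟨t, ht⟩ := hne
    exact ⟨t, ht, Set.empty_subset t⟩
  · intro _ _ ih hsub'
    obtain ⟨t, htc, hts⟩ := ih ((Set.subset_insert a s).trans hsub')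
    obtain ⟨t', ht'c, hat'⟩ := hsub' (Set.mem_insert a s)
    rcases hc.total htc ht'c with h | h
    · exact ⟨t', ht'c, Set.insert_subset hat' (hts.trans h)⟩
    · exact ⟨t, htc, Set.insert_subset (h hat') hts⟩

lemma good_sUnion {c : Set (Set G)} (hc : IsChain (· ⊆ ·) c) (hne : c.Nonempty)
    (hgood : ∀ t ∈ c, Good t) : Good (⋃₀ c) := by
  intro F hF
  by_contra hcon
  push_neg at hcon
  classical
  -- for each sign assignment on F, extract a finite witness
  have key : ∀ d : F → Bool, ∃ W : Finset G, ↑W ⊆ ⋃₀ c ∧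
      (1 : G) ∈ normalSubsemigroupClosure G
        (↑W ∪ sgn (fun x => if h : x ∈ F then d ⟨x, h⟩ else true) ↑F) := by
    intro d
    set ε : G → Bool := fun x => if h : x ∈ F then d ⟨x, h⟩ else true with hε
    have h1 := hcon ε
    obtain ⟨W, hWsub, hWmem⟩ := mem_nsc_finite h1
    refine ⟨W.filter (· ∈ ⋃₀ c), ?_, ?_⟩
    · intro x hx; simp only [Finset.coe_filter, Set.mem_setOf_eq] at hx
      exact hx.2
    · refine nsc_mono ?_ hWmem
      intro x hx
      rcases hWsub hx with h | h
      · refine Set.mem_union_left _ ?_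
        simp only [Finset.coe_filter, Set.mem_setOf_eq]
        exact ⟨hx, h⟩
      · exact Set.mem_union_right _ h
  choose W hWsub hWmem using key
  -- collect all witnesses into a single finite set
  have hfin : (⋃ d : F → Bool, (W d : Set G)).Finite :=
    Set.finite_iUnion (fun d => (W d).finite_toSet)
  have hUsub : (⋃ d : F → Bool, (W d : Set G)) ⊆ ⋃₀ c :=
    Set.iUnion_subset fun d => hWsub d
  obtain ⟨t, htc, hts⟩ := finite_subset_chain hc hne hfin hUsub
  obtain ⟨ε, hε⟩ := hgood t htc F hF
  apply hε
  set d : F → Bool := fun x => ε x with hd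
  have heq : sgn (fun x => if h : x ∈ F then d ⟨x, h⟩ else true) (↑F : Set G)
      = sgn ε ↑F := by
    apply sgn_congr
    intro x hx
    simp only [Finset.mem_coe] at hx
    simp [hd, hx]
  have := hWmem d
  rw [heq] at this
  refine nsc_mono ?_ this
  apply Set.union_subset_union_left
  exact (Set.subset_iUnion (fun d : F → Bool => (W d : Set G)) d).trans hts

end FuchsAux

open FuchsAux in
/-- Fuchs: `S` extends to a two-sided total order of `G` iff for every finite
list of non-identity elements there is a choice of signs keeping `1` out of the
generated normal subsemigroup. -/
theorem fuchs_ordering_theorem (G : Type*) [Group G] (S : Set G) :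
    (∃ r : G → G → Prop, IsLinearOrder G r ∧
        (∀ a b c d : G, r a b → r (c * a * d) (c * b * d)) ∧
        (∀ s ∈ S, r 1 s ∧ s ≠ 1)) ↔
      (∀ (m : ℕ) (a : Fin m → G), (∀ i, a i ≠ 1) →
        ∃ δ : Fin m → Bool,
          (1 : G) ∉ normalSubsemigroupClosure G
            (S ∪ Set.range (fun i => if δ i then a i else (a i)⁻¹))) := by
  classical
  constructor
  · -- forward: an order gives the finite condition
    rintro ⟨r, hlin, hinv, hS⟩ m a ha
    refine ⟨fun i => if r 1 (a i) then true else false, ?_⟩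
    intro h1
    -- every element of the closure is strictly positive
    have pos : ∀ x ∈ normalSubsemigroupClosure G
        (S ∪ Set.range (fun i => if (if r 1 (a i) then true else false)
          then a i else (a i)⁻¹)), r 1 x ∧ x ≠ 1 := by
      intro x hx
      induction hx using Subsemigroup.closure_induction with
      | mem y hy =>
          obtain ⟨t, ht, g, rfl⟩ := hy
          have hpos : r 1 t ∧ t ≠ 1 := by
            rcases ht with ht | ht
            · exact hS t ht
            · obtain ⟨i, rfl⟩ := ht
              by_cases hi : r 1 (a i)
              · have ht : (if (if r 1 (a i) then true else false) = true
                    then a i else (a i)⁻¹) = a i := by simp [hi]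
                simp only [ht]
                exact ⟨hi, ha i⟩
              · have ht : (if (if r 1 (a i) then true else false) = true
                    then a i else (a i)⁻¹) = (a i)⁻¹ := by simp [hi]
                simp only [ht]
                have htot := hlin.toTotal.total 1 (a i)
                have hlt : r (a i) 1 := htot.resolve_left hi
                have := hinv _ _ (a i)⁻¹ 1 hlt
                simp only [mul_one, inv_mul_cancel] at this
                exact ⟨this, fun h => ha i (by simpa using congrArg (·⁻¹) h)⟩
          constructor
          · have := hinv _ _ g g⁻¹ hpos.1
            simpa using this
          · intro h
            apply hpos.2
            have : g⁻¹ * (g * t * g⁻¹) * g = g⁻¹ * 1 * g := by rw [h]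
            simpa [mul_assoc] using this
      | mul x y hx hy ihx ihy =>
          obtain ⟨hx1, hxne⟩ := ihx
          obtain ⟨hy1, hyne⟩ := ihy
          constructor
          · have h2 : r y (x * y) := by
              have := hinv _ _ 1 y hx1
              simpa using this
            exact hlin.toIsPartialOrder.toIsPreorder.toIsTrans.trans _ _ _ hy1 h2
          · intro h
            apply hxne
            have hyx : y = x⁻¹ := eq_inv_of_mul_eq_one_right h
            have hxinv : r 1 x⁻¹ := hyx ▸ hy1
            have : r x⁻¹ 1 := by
              have := hinv _ _ x⁻¹ 1 hx1
              simpa using this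
            have hx1' : x⁻¹ = 1 :=
              hlin.toIsPartialOrder.toAntisymm.antisymm _ _ this hxinv
            simpa using congrArg (·⁻¹) hx1'
    have := pos 1 h1
    exact this.2 rfl
  · -- backward: compactness
    intro hyp
    -- S is good
    have hSgood : Good S := by
      intro F hF
      have hcard := hyp F.card (fun i => (F.equivFin.symm i : G))
        (fun i => by
          intro h
          exact hF (h ▸ (F.equivFin.symm i).2))
      obtain ⟨δ, hδ⟩ := hcard
      refine ⟨fun x => if h : x ∈ F then δ (F.equivFin ⟨x, h⟩) else true, ?_⟩
      intro hmem
      apply hδ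
      refine nsc_mono ?_ hmem
      apply Set.union_subset_union_right
      rintro x ⟨y, hy, rfl⟩
      simp only [Finset.mem_coe] at hy
      refine ⟨F.equivFin ⟨y, hy⟩, ?_⟩
      simp [hy]
    -- Zorn's lemma: a maximal good set containing S
    have hchainub : ∀ c ⊆ {T : Set G | S ⊆ T ∧ Good T}, IsChain (· ⊆ ·) c → c.Nonempty →
        ∃ ub ∈ {T : Set G | S ⊆ T ∧ Good T}, ∀ s ∈ c, s ⊆ ub := by
      intro c hcsub hchain hcne
      obtain ⟨t0, ht0⟩ := id hcne
      exact ⟨⋃₀ c, ⟨(hcsub ht0).1.trans (Set.subset_sUnion_of_mem ht0),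
        good_sUnion hchain hcne (fun t ht => (hcsub ht).2)⟩,
        fun s hs => Set.subset_sUnion_of_mem hs⟩
    obtain ⟨T, hST, hTmax⟩ := zorn_subset_nonempty _ hchainub S ⟨Set.Subset.rfl, hSgood⟩
    obtain ⟨⟨hSsubT, hTgood⟩, hmax⟩ := hTmax
    -- the positive cone
    set P : Set G := ↑(normalSubsemigroupClosure G T) with hP
    have h1P : (1 : G) ∉ P := by
      obtain ⟨ε, hε⟩ := hTgood ∅ (by simp)
      intro h
      apply hε
      refine nsc_mono ?_ h
      simp [sgn]
    have hTP : T ⊆ P := subset_nsc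
    have hPmul : ∀ x ∈ P, ∀ y ∈ P, x * y ∈ P := fun x hx y hy => mul_mem hx hy
    have hPconj : ∀ x ∈ P, ∀ g : G, g * x * g⁻¹ ∈ P := fun x hx g => nsc_conj hx g
    have htotal : ∀ g : G, g ≠ 1 → g ∈ P ∨ g⁻¹ ∈ P := by
      intro g hg
      rcases good_insert hTgood hg with h | h
      · left
        apply hTP
        have : insert g T ⊆ T :=
          hmax ⟨hSsubT.trans (Set.subset_insert g T), h⟩ (Set.subset_insert g T)
        exact this (Set.mem_insert g T)
      · right
        apply hTP
        have : insert g⁻¹ T ⊆ T :=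
          hmax ⟨hSsubT.trans (Set.subset_insert g⁻¹ T), h⟩ (Set.subset_insert g⁻¹ T)
        exact this (Set.mem_insert g⁻¹ T)
    have hSP : S ⊆ P := hSsubT.trans hTP
    -- define the order
    refine ⟨fun a b => a = b ∨ b * a⁻¹ ∈ P, ?_, ?_, ?_⟩
    · refine { refl := fun a => Or.inl rfl, trans := ?_, antisymm := ?_, total := ?_ }
      · rintro a b c (rfl | hab) h
        · exact h
        · rcases h with rfl | hbc
          · exact Or.inr hab
          · refine Or.inr ?_
            have : c * a⁻¹ = (c * b⁻¹) * (b * a⁻¹) := by group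
            rw [this]; exact hPmul _ hbc _ hab
      · rintro a b (rfl | hab) h
        · rfl
        · rcases h with rfl | hba
          · rfl
          · exfalso
            apply h1P
            have : (1 : G) = (b * a⁻¹) * (a * b⁻¹) := by group
            rw [this]; exact hPmul _ hab _ hba
      · intro a b
        by_cases h : a = b
        · exact Or.inl (Or.inl h)
        · have hne : b * a⁻¹ ≠ 1 := by
            intro hc
            apply h
            have := congrArg (· * a) hc
            simpa [mul_assoc] using this.symm
          rcases htotal _ hne with hp | hp
          · exact Or.inl (Or.inr hp)
          · refine Or.inr (Or.inr ?_)
            have : a * b⁻¹ = (b * a⁻¹)⁻¹ := by group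
            rw [this]; exact hp
    · rintro a b c d (rfl | hab)
      · exact Or.inl rfl
      · refine Or.inr ?_
        have : (c * b * d) * (c * a * d)⁻¹ = c * (b * a⁻¹) * c⁻¹ := by group
        rw [this]; exact hPconj _ hab c
    · intro s hs
      refine ⟨Or.inr (by simpa using hSP hs), ?_⟩
      intro h
      exact h1P (h ▸ hSP hs)
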